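/- In the bootstrap setting, assume: (i) Λ_l and Λ_r satisfy the Green's function decay property for (ℓ, γ); (ii) H^{Λ̂} − E is invertible and ‖P (H^{Λ̂} − E)^{−1} Γ_𝒫‖ ≤ 2/ρ̂ in operator norm; (iii) |Λ| ≤ M. Let ℓ̂ ∈ ℕ with ℓ̂ > 16·|log ε|·M and set γ̌ := γ − 6·|log ε|·M/ℓ̂. Then Λ̂ satisfies the Green's function decay property for (ℓ̂, γ̌): for all m, n ∈ Λ̂ with |m − n| ≥ ℓ̂, |((H^{Λ̂} − E)^{−1})(m,n)| ≤ e^{−γ̌|m−n|}. -/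

import Mathlib

/-- The Dirichlet restriction `H^{[lo,hi]}` of `εΔ + V` to an integer interval. -/
noncomputable def dirichletMatrix (ε : ℝ) (V : ℤ → ℝ) (lo hi : ℤ) :
    Matrix ↥(Finset.Icc lo hi) ↥(Finset.Icc lo hi) ℝ :=
  Matrix.of fun m n =>
    if (m : ℤ) = (n : ℤ) then V (m : ℤ)
    else if ((m : ℤ) - (n : ℤ)).natAbs = 1 then ε else 0

/-- `[lo,hi]` satisfies the Green's function decay property for `(ℓ, γ)` at energy `E`. -/
def hasGreenDecay (ε : ℝ) (V : ℤ → ℝ) (E : ℝ) (lo hi : ℤ) (ℓ : ℕ) (γ : ℝ) : Prop :=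
  IsUnit (dirichletMatrix ε V lo hi - E • 1) ∧
  ∀ m n : ↥(Finset.Icc lo hi), (ℓ : ℝ) ≤ |((m : ℤ) : ℝ) - ((n : ℤ) : ℝ)| →
    |(dirichletMatrix ε V lo hi - E • 1)⁻¹ m n| ≤
      Real.exp (-γ * |((m : ℤ) : ℝ) - ((n : ℤ) : ℝ)|)

/-- Index of the block of the three-block partition `Λ_l = [A,a−1], Λ = [a,b], Λ_r = [b+1,B]`
containing `k`. -/
def blk3 (a b k : ℤ) : ℕ := if k < a then 0 else if k ≤ b then 1 else 2

/-- `Γ_𝒫`: the coupling matrix of the three-block partition, whose only nonzero entries are the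
four `ε`'s of `H^{Λ̂}` joining `Λ_l` to `Λ` and `Λ` to `Λ_r`. -/
noncomputable def gamma3 (ε : ℝ) (A B a b : ℤ) :
    Matrix ↥(Finset.Icc A B) ↥(Finset.Icc A B) ℝ :=
  Matrix.of fun m n =>
    if ((m : ℤ) - (n : ℤ)).natAbs = 1 ∧ blk3 a b (m : ℤ) ≠ blk3 a b (n : ℤ) then ε else 0

/-- The diagonal projection `P` onto the coordinates in `[a − ℓ, b + ℓ] ∩ [A,B]`. -/
def projP (A B a b : ℤ) (ℓ : ℕ) : Matrix ↥(Finset.Icc A B) ↥(Finset.Icc A B) ℝ :=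
  Matrix.of fun m n =>
    if m = n ∧ a - (ℓ : ℤ) ≤ (m : ℤ) ∧ (m : ℤ) ≤ b + (ℓ : ℤ) then 1 else 0


namespace BGaux

set_option maxHeartbeats 1600000
set_option synthInstance.maxHeartbeats 1000000
set_option linter.dupNamespace false

open Matrix
open scoped RealInnerProductSpace

noncomputable def dm (ε : ℝ) (V : ℤ → ℝ) (E : ℝ) (lo hi : ℤ) :
    Matrix ↥(Finset.Icc lo hi) ↥(Finset.Icc lo hi) ℝ :=
  dirichletMatrix ε V lo hi - E • 1

noncomputable def hfun (ε : ℝ) (V : ℤ → ℝ) (E : ℝ) (x y : ℤ) : ℝ :=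
  if x = y then V x - E else if (x - y).natAbs = 1 then ε else 0

lemma dm_entry (ε : ℝ) (V : ℤ → ℝ) (E : ℝ) (lo hi : ℤ) (m n : ↥(Finset.Icc lo hi)) :
    dm ε V E lo hi m n = hfun ε V E ↑m ↑n := by
  unfold dm hfun
  rw [Matrix.sub_apply, Matrix.smul_apply, Matrix.one_apply]
  by_cases h : (m:ℤ) = (n:ℤ)
  · rw [if_pos (Subtype.ext h)]
    simp [dirichletMatrix, h, Subtype.ext h]
  · rw [if_neg (fun hc => h (congrArg _ hc))]
    simp [dirichletMatrix, h, show m ≠ n from fun hc => h (congrArg _ hc)]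

noncomputable def ginv (ε : ℝ) (V : ℤ → ℝ) (E : ℝ) (lo hi : ℤ) (x y : ℤ) : ℝ :=
  if hx : x ∈ Finset.Icc lo hi then
    if hy : y ∈ Finset.Icc lo hi then
      (dm ε V E lo hi)⁻¹ ⟨x, hx⟩ ⟨y, hy⟩
    else 0
  else 0

lemma ginv_apply (ε : ℝ) (V : ℤ → ℝ) (E : ℝ) (lo hi : ℤ) (m n : ↥(Finset.Icc lo hi)) :
    (dm ε V E lo hi)⁻¹ m n = ginv ε V E lo hi ↑m ↑n := by
  simp [ginv, m.2, n.2]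

lemma hfun_symm (ε : ℝ) (V : ℤ → ℝ) (E : ℝ) (x y : ℤ) :
    hfun ε V E x y = hfun ε V E y x := by
  by_cases h : x = y
  · subst h; rfl
  · unfold hfun
    rw [if_neg h, if_neg (Ne.symm h)]
    have hh : (x - y).natAbs = (y - x).natAbs := by omega
    rw [hh]

lemma dm_symm (ε : ℝ) (V : ℤ → ℝ) (E : ℝ) (lo hi : ℤ) :
    (dm ε V E lo hi)ᵀ = dm ε V E lo hi := by
  ext i j
  rw [Matrix.transpose_apply, dm_entry, dm_entry, hfun_symm]

lemma ginv_symm (ε : ℝ) (V : ℤ → ℝ) (E : ℝ) (lo hi : ℤ) (x y : ℤ) :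
    ginv ε V E lo hi x y = ginv ε V E lo hi y x := by
  by_cases hx : x ∈ Finset.Icc lo hi
  · by_cases hy : y ∈ Finset.Icc lo hi
    · have h1 : ((dm ε V E lo hi)⁻¹)ᵀ = (dm ε V E lo hi)⁻¹ := by
        rw [Matrix.transpose_nonsing_inv, dm_symm]
      have h2 := congrFun (congrFun h1 ⟨y, hy⟩) ⟨x, hx⟩
      rw [Matrix.transpose_apply] at h2
      simp only [ginv, dif_pos hx, dif_pos hy]
      exact h2
    · simp [ginv, hx, hy]
  · simp [ginv, hx]

lemma row_eq (ε : ℝ) (V : ℤ → ℝ) (E : ℝ) (lo hi : ℤ)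
    (h : IsUnit (dm ε V E lo hi))
    (k n : ℤ) (hk : k ∈ Finset.Icc lo hi) (hn : n ∈ Finset.Icc lo hi) :
    ∑ j ∈ Finset.Icc lo hi, hfun ε V E k j * ginv ε V E lo hi j n
      = if k = n then 1 else 0 := by
  have hdet := (Matrix.isUnit_iff_isUnit_det _).mp h
  have h1 := Matrix.mul_nonsing_inv _ hdet
  have h2 := congrFun (congrFun h1 ⟨k, hk⟩) ⟨n, hn⟩
  rw [Matrix.mul_apply] at h2
  have h3 : ∀ j : ↥(Finset.Icc lo hi),
      dm ε V E lo hi ⟨k, hk⟩ j * (dm ε V E lo hi)⁻¹ j ⟨n, hn⟩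
      = hfun ε V E k ↑j * ginv ε V E lo hi ↑j n := by
    intro j; rw [dm_entry, ginv_apply]
  rw [Finset.sum_congr rfl (fun j _ => h3 j)] at h2
  rw [Finset.sum_coe_sort (Finset.Icc lo hi)
    (fun z => hfun ε V E k z * ginv ε V E lo hi z n)] at h2
  rw [h2, Matrix.one_apply]
  by_cases hkn : k = n
  · rw [if_pos hkn, if_pos (Subtype.ext hkn)]
  · rw [if_neg hkn, if_neg (fun hc => hkn (Subtype.ext_iff.mp hc))]



lemma icc_split (A B c : ℤ) (h1 : A ≤ c + 1) (h2 : c ≤ B) :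
    Finset.Icc A B = Finset.Icc A c ∪ Finset.Icc (c+1) B := by
  ext z; simp only [Finset.mem_Icc, Finset.mem_union]; omega

lemma icc_disj (A B c : ℤ) : Disjoint (Finset.Icc A c) (Finset.Icc (c+1) B) := by
  rw [Finset.disjoint_left]; intro z hz hz'
  simp only [Finset.mem_Icc] at hz hz'; omega

/-- Resolvent identity at the left shoulder `[A, a-1]`. -/
lemma left_identity (ε : ℝ) (V : ℤ → ℝ) (E : ℝ) (A B a : ℤ)
    (hinv : IsUnit (dm ε V E A B)) (hinvl : IsUnit (dm ε V E A (a-1)))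
    (haB : a ≤ B) (m n : ℤ) (hm : m ∈ Finset.Icc A (a-1)) (hn : n ∈ Finset.Icc A B) :
    ginv ε V E A B m n = (if n ≤ a-1 then ginv ε V E A (a-1) m n else 0)
      - ε * ginv ε V E A (a-1) m (a-1) * ginv ε V E A B a n := by
  have hAa1 : A ≤ a - 1 := (Finset.mem_Icc.mp hm).1.trans (Finset.mem_Icc.mp hm).2
  have hdetL := (Matrix.isUnit_iff_isUnit_det _).mp hinvl
  set sL := Finset.Icc A (a-1) with hsL
  set v : ↥sL → ℝ := fun k => ginv ε V E A B ↑k n with hv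
  -- Step 1 : the modified row equation on the shoulder
  have step1 : ∀ k : ↥sL, (dm ε V E A (a-1)).mulVec v k
      = (if (k:ℤ) = n then 1 else 0) - (if (k:ℤ) = a-1 then ε * ginv ε V E A B a n else 0) := by
    intro k
    obtain ⟨hk1, hk2⟩ := Finset.mem_Icc.mp k.2
    have e1 : (dm ε V E A (a-1)).mulVec v k
        = ∑ j ∈ sL, hfun ε V E ↑k j * ginv ε V E A B j n := by
      rw [Matrix.mulVec]
      show ∑ j : ↥sL, dm ε V E A (a-1) k j * v j = _
      rw [Finset.sum_congr rfl (fun j _ => by rw [dm_entry])]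
      exact Finset.sum_coe_sort sL (fun z => hfun ε V E ↑k z * ginv ε V E A B z n)
    have e2 : ∑ j ∈ Finset.Icc A B, hfun ε V E ↑k j * ginv ε V E A B j n
        = if (k:ℤ) = n then 1 else 0 := by
      apply row_eq ε V E A B hinv _ n _ hn
      exact Finset.mem_Icc.mpr ⟨hk1, hk2.trans (by omega)⟩
    have e3 : ∑ j ∈ Finset.Icc a B, hfun ε V E ↑k j * ginv ε V E A B j n
        = if (k:ℤ) = a-1 then ε * ginv ε V E A B a n else 0 := by
      rw [Finset.sum_eq_single_of_mem a (Finset.mem_Icc.mpr ⟨le_refl a, haB⟩)]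
      · have : hfun ε V E ↑k a = if (k:ℤ) = a-1 then ε else 0 := by
          unfold hfun
          split_ifs with h1 h2 h3 h4 <;> first | rfl | omega
        rw [this]; split_ifs <;> ring
      · intro j hj hja
        obtain ⟨hj1, hj2⟩ := Finset.mem_Icc.mp hj
        have : hfun ε V E ↑k j = 0 := by
          unfold hfun; split_ifs with h1 h2 <;> first | omega | rfl
        rw [this, zero_mul]
    have e4 : Finset.Icc A B = sL ∪ Finset.Icc a B := by
      rw [hsL]
      have := icc_split A B (a-1) (by omega) (by omega)
      simpa using this
    rw [e1]
    have e5 := e2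
    rw [e4, Finset.sum_union (by simpa using icc_disj A B (a-1))] at e5
    rw [e3] at e5
    linarith [e5]
  -- Step 2 : invert on the shoulder
  have step2 : ∀ mm : ↥sL, v mm = (dm ε V E A (a-1))⁻¹.mulVec ((dm ε V E A (a-1)).mulVec v) mm := by
    intro mm
    rw [Matrix.mulVec_mulVec, Matrix.nonsing_inv_mul _ hdetL, Matrix.one_mulVec]
  -- Step 3 : evaluate
  have step3 := step2 ⟨m, hm⟩
  rw [Matrix.mulVec, show ((dm ε V E A (a-1))⁻¹ ⟨m, hm⟩ ⬝ᵥ (dm ε V E A (a-1)).mulVec v)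
      = ∑ k : ↥sL, (dm ε V E A (a-1))⁻¹ ⟨m, hm⟩ k * (dm ε V E A (a-1)).mulVec v k from rfl] at step3
  rw [Finset.sum_congr rfl (fun k _ => by rw [step1 k, ginv_apply])] at step3
  rw [Finset.sum_coe_sort sL (fun z => ginv ε V E A (a-1) m z *
      ((if z = n then 1 else 0) - (if z = a-1 then ε * ginv ε V E A B a n else 0)))] at step3
  have e6 : ∑ z ∈ sL, ginv ε V E A (a-1) m z *
      ((if z = n then 1 else 0) - (if z = a-1 then ε * ginv ε V E A B a n else 0))
      = (if n ≤ a-1 then ginv ε V E A (a-1) m n else 0)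
        - ε * ginv ε V E A (a-1) m (a-1) * ginv ε V E A B a n := by
    rw [Finset.sum_congr rfl (fun z _ => by rw [mul_sub])]
    rw [Finset.sum_sub_distrib]
    congr 1
    · simp only [mul_ite, mul_one, mul_zero]
      rw [Finset.sum_ite_eq' sL n (fun z => ginv ε V E A (a-1) m z)]
      have hnA : A ≤ n := (Finset.mem_Icc.mp hn).1
      by_cases hna : n ≤ a - 1
      · rw [if_pos (Finset.mem_Icc.mpr ⟨hnA, hna⟩), if_pos hna]
      · rw [if_neg (fun hc => hna (Finset.mem_Icc.mp hc).2), if_neg hna]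
    · simp only [mul_ite, mul_zero]
      rw [Finset.sum_ite_eq' sL (a-1)
        (fun z => ginv ε V E A (a-1) m z * (ε * ginv ε V E A B a n))]
      rw [if_pos (Finset.mem_Icc.mpr ⟨hAa1, le_refl _⟩)]
      ring
  rw [e6] at step3
  exact step3

/-- Resolvent identity at the right shoulder `[b+1, B]`. -/
lemma right_identity (ε : ℝ) (V : ℤ → ℝ) (E : ℝ) (A B b : ℤ)
    (hinv : IsUnit (dm ε V E A B)) (hinvr : IsUnit (dm ε V E (b+1) B))
    (hAb : A ≤ b) (m n : ℤ) (hm : m ∈ Finset.Icc (b+1) B) (hn : n ∈ Finset.Icc A B) :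
    ginv ε V E A B m n = (if b+1 ≤ n then ginv ε V E (b+1) B m n else 0)
      - ε * ginv ε V E (b+1) B m (b+1) * ginv ε V E A B b n := by
  have hbB : b + 1 ≤ B := (Finset.mem_Icc.mp hm).1.trans (Finset.mem_Icc.mp hm).2
  have hdetR := (Matrix.isUnit_iff_isUnit_det _).mp hinvr
  set sR := Finset.Icc (b+1) B with hsR
  set v : ↥sR → ℝ := fun k => ginv ε V E A B ↑k n with hv
  have step1 : ∀ k : ↥sR, (dm ε V E (b+1) B).mulVec v k
      = (if (k:ℤ) = n then 1 else 0) - (if (k:ℤ) = b+1 then ε * ginv ε V E A B b n else 0) := by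
    intro k
    obtain ⟨hk1, hk2⟩ := Finset.mem_Icc.mp k.2
    have e1 : (dm ε V E (b+1) B).mulVec v k
        = ∑ j ∈ sR, hfun ε V E ↑k j * ginv ε V E A B j n := by
      rw [Matrix.mulVec]
      show ∑ j : ↥sR, dm ε V E (b+1) B k j * v j = _
      rw [Finset.sum_congr rfl (fun j _ => by rw [dm_entry])]
      exact Finset.sum_coe_sort sR (fun z => hfun ε V E ↑k z * ginv ε V E A B z n)
    have e2 : ∑ j ∈ Finset.Icc A B, hfun ε V E ↑k j * ginv ε V E A B j n
        = if (k:ℤ) = n then 1 else 0 := by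
      apply row_eq ε V E A B hinv _ n _ hn
      exact Finset.mem_Icc.mpr ⟨(by omega : A ≤ (k:ℤ)), hk2⟩
    have e3 : ∑ j ∈ Finset.Icc A b, hfun ε V E ↑k j * ginv ε V E A B j n
        = if (k:ℤ) = b+1 then ε * ginv ε V E A B b n else 0 := by
      rw [Finset.sum_eq_single_of_mem b (Finset.mem_Icc.mpr ⟨hAb, le_refl b⟩)]
      · have : hfun ε V E ↑k b = if (k:ℤ) = b+1 then ε else 0 := by
          unfold hfun
          split_ifs with h1 h2 h3 h4 <;> first | rfl | omega
        rw [this]; split_ifs <;> ring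
      · intro j hj hjb
        obtain ⟨hj1, hj2⟩ := Finset.mem_Icc.mp hj
        have : hfun ε V E ↑k j = 0 := by
          unfold hfun; split_ifs with h1 h2 <;> first | omega | rfl
        rw [this, zero_mul]
    rw [e1]
    have e5 := e2
    rw [icc_split A B b (by omega) (by omega),
      Finset.sum_union (icc_disj A B b)] at e5
    rw [e3] at e5
    linarith [e5]
  have step2 : ∀ mm : ↥sR, v mm = (dm ε V E (b+1) B)⁻¹.mulVec ((dm ε V E (b+1) B).mulVec v) mm := by
    intro mm
    rw [Matrix.mulVec_mulVec, Matrix.nonsing_inv_mul _ hdetR, Matrix.one_mulVec]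
  have step3 := step2 ⟨m, hm⟩
  rw [Matrix.mulVec, show ((dm ε V E (b+1) B)⁻¹ ⟨m, hm⟩ ⬝ᵥ (dm ε V E (b+1) B).mulVec v)
      = ∑ k : ↥sR, (dm ε V E (b+1) B)⁻¹ ⟨m, hm⟩ k * (dm ε V E (b+1) B).mulVec v k from rfl] at step3
  rw [Finset.sum_congr rfl (fun k _ => by rw [step1 k, ginv_apply])] at step3
  rw [Finset.sum_coe_sort sR (fun z => ginv ε V E (b+1) B m z *
      ((if z = n then 1 else 0) - (if z = b+1 then ε * ginv ε V E A B b n else 0)))] at step3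
  have e6 : ∑ z ∈ sR, ginv ε V E (b+1) B m z *
      ((if z = n then 1 else 0) - (if z = b+1 then ε * ginv ε V E A B b n else 0))
      = (if b+1 ≤ n then ginv ε V E (b+1) B m n else 0)
        - ε * ginv ε V E (b+1) B m (b+1) * ginv ε V E A B b n := by
    rw [Finset.sum_congr rfl (fun z _ => by rw [mul_sub])]
    rw [Finset.sum_sub_distrib]
    congr 1
    · simp only [mul_ite, mul_one, mul_zero]
      rw [Finset.sum_ite_eq' sR n (fun z => ginv ε V E (b+1) B m z)]
      have hnB : n ≤ B := (Finset.mem_Icc.mp hn).2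
      by_cases hnb : b+1 ≤ n
      · rw [if_pos (Finset.mem_Icc.mpr ⟨hnb, hnB⟩), if_pos hnb]
      · rw [if_neg (fun hc => hnb (Finset.mem_Icc.mp hc).1), if_neg hnb]
    · simp only [mul_ite, mul_zero]
      rw [Finset.sum_ite_eq' sR (b+1)
        (fun z => ginv ε V E (b+1) B m z * (ε * ginv ε V E A B b n))]
      rw [if_pos (Finset.mem_Icc.mpr ⟨le_refl _, hbB⟩)]
      ring
  rw [e6] at step3
  exact step3





lemma entry_le_opNorm {n : Type*} [Fintype n] [DecidableEq n] (X : Matrix n n ℝ) (i j : n) :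
    |X i j| ≤ ‖Matrix.toEuclideanCLM (𝕜 := ℝ) X‖ := by
  set T := Matrix.toEuclideanCLM (𝕜 := ℝ) X with hT
  set x : EuclideanSpace ℝ n := EuclideanSpace.single j (1:ℝ) with hx
  have h1 : T x i = X i j := by
    show T (WithLp.toLp 2 (Pi.single j 1)) i = X i j
    rw [Matrix.toEuclideanCLM_toLp]
    show (Matrix.toLin' X (Pi.single j 1)) i = X i j
    rw [Matrix.toLin'_apply, Matrix.mulVec_single_one]
    rfl
  have h2 : |T x i| ≤ ‖T x‖ := by
    have := abs_real_inner_le_norm (EuclideanSpace.single i (1:ℝ)) (T x)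
    rw [EuclideanSpace.inner_single_left] at this
    simpa using this
  calc |X i j| = |T x i| := by rw [h1]
    _ ≤ ‖T x‖ := h2
    _ ≤ ‖T‖ * ‖x‖ := T.le_opNorm x
    _ = ‖T‖ := by rw [hx, EuclideanSpace.norm_single]; simp

lemma PG_entry (ε : ℝ) (V : ℤ → ℝ) (E : ℝ) (A B a b : ℤ) (ℓ : ℕ)
    (i u' : ↥(Finset.Icc A B)) (h1 : a - (ℓ:ℤ) ≤ (i:ℤ)) (h2 : (i:ℤ) ≤ b + (ℓ:ℤ)) :
    (projP A B a b ℓ * (dm ε V E A B)⁻¹) i u' = (dm ε V E A B)⁻¹ i u' := by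
  rw [Matrix.mul_apply]
  have hterm : ∀ u : ↥(Finset.Icc A B),
      projP A B a b ℓ i u * (dm ε V E A B)⁻¹ u u'
      = if i = u then (dm ε V E A B)⁻¹ u u' else 0 := by
    intro u
    show (if i = u ∧ a - (ℓ:ℤ) ≤ (i:ℤ) ∧ (i:ℤ) ≤ b + (ℓ:ℤ) then (1:ℝ) else 0) * _ = _
    by_cases h : i = u
    · rw [if_pos ⟨h, h1, h2⟩, if_pos h, one_mul]
    · rw [if_neg (fun hc => h hc.1), if_neg h, zero_mul]
  rw [Finset.sum_congr rfl (fun u _ => hterm u), Finset.sum_ite_eq]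
  rw [if_pos (Finset.mem_univ i)]

lemma PGG_col_a (ε : ℝ) (V : ℤ → ℝ) (E : ℝ) (A B a b : ℤ) (ℓ : ℕ)
    (hab : a ≤ b) (haB : a ≤ B) (hAa : A ≤ a)
    (i : ↥(Finset.Icc A B)) (hmem : a - 1 ∈ Finset.Icc A B)
    (h1 : a - (ℓ:ℤ) ≤ (i:ℤ)) (h2 : (i:ℤ) ≤ b + (ℓ:ℤ)) :
    (projP A B a b ℓ * (dm ε V E A B)⁻¹ * gamma3 ε A B a b) i ⟨a-1, hmem⟩
      = ginv ε V E A B ↑i a * ε := by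
  rw [Matrix.mul_apply]
  have hterm : ∀ u' : ↥(Finset.Icc A B),
      (projP A B a b ℓ * (dm ε V E A B)⁻¹) i u' * gamma3 ε A B a b u' ⟨a-1, hmem⟩
      = ginv ε V E A B ↑i ↑u' *
        (if ((u':ℤ) - (a-1)).natAbs = 1 ∧ blk3 a b (u':ℤ) ≠ blk3 a b (a-1) then ε else 0) := by
    intro u'
    rw [PG_entry ε V E A B a b ℓ i u' h1 h2, ginv_apply]
    rfl
  rw [Finset.sum_congr rfl (fun u' _ => hterm u')]
  rw [Finset.sum_coe_sort (Finset.Icc A B) (fun z => ginv ε V E A B ↑i z *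
      (if (z - (a-1)).natAbs = 1 ∧ blk3 a b z ≠ blk3 a b (a-1) then ε else 0))]
  rw [Finset.sum_eq_single_of_mem a (Finset.mem_Icc.mpr ⟨hAa, haB⟩)]
  · have hγ : (if (a - (a-1)).natAbs = 1 ∧ blk3 a b a ≠ blk3 a b (a-1) then ε else 0) = ε := by
      rw [if_pos]
      refine ⟨by omega, ?_⟩
      unfold blk3
      rw [if_neg (lt_irrefl a), if_pos hab, if_pos (by omega : a - 1 < a)]
      exact one_ne_zero
    rw [hγ]
  · intro z hz hza
    have hγ : (if (z - (a-1)).natAbs = 1 ∧ blk3 a b z ≠ blk3 a b (a-1) then ε else 0) = 0 := by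
      rw [if_neg]
      rintro ⟨hn1, hn2⟩
      have hzval : z = a - 2 := by omega
      apply hn2
      subst hzval
      unfold blk3
      rw [if_pos (by omega : a - 2 < a), if_pos (by omega : a - 1 < a)]
    rw [hγ, mul_zero]

lemma PGG_col_b (ε : ℝ) (V : ℤ → ℝ) (E : ℝ) (A B a b : ℤ) (ℓ : ℕ)
    (hab : a ≤ b) (hbB : b ≤ B) (hAb : A ≤ b)
    (i : ↥(Finset.Icc A B)) (hmem : b + 1 ∈ Finset.Icc A B)
    (h1 : a - (ℓ:ℤ) ≤ (i:ℤ)) (h2 : (i:ℤ) ≤ b + (ℓ:ℤ)) :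
    (projP A B a b ℓ * (dm ε V E A B)⁻¹ * gamma3 ε A B a b) i ⟨b+1, hmem⟩
      = ginv ε V E A B ↑i b * ε := by
  rw [Matrix.mul_apply]
  have hterm : ∀ u' : ↥(Finset.Icc A B),
      (projP A B a b ℓ * (dm ε V E A B)⁻¹) i u' * gamma3 ε A B a b u' ⟨b+1, hmem⟩
      = ginv ε V E A B ↑i ↑u' *
        (if ((u':ℤ) - (b+1)).natAbs = 1 ∧ blk3 a b (u':ℤ) ≠ blk3 a b (b+1) then ε else 0) := by
    intro u'
    rw [PG_entry ε V E A B a b ℓ i u' h1 h2, ginv_apply]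
    rfl
  rw [Finset.sum_congr rfl (fun u' _ => hterm u')]
  rw [Finset.sum_coe_sort (Finset.Icc A B) (fun z => ginv ε V E A B ↑i z *
      (if (z - (b+1)).natAbs = 1 ∧ blk3 a b z ≠ blk3 a b (b+1) then ε else 0))]
  rw [Finset.sum_eq_single_of_mem b (Finset.mem_Icc.mpr ⟨hAb, hbB⟩)]
  · have hγ : (if (b - (b+1)).natAbs = 1 ∧ blk3 a b b ≠ blk3 a b (b+1) then ε else 0) = ε := by
      rw [if_pos]
      refine ⟨by omega, ?_⟩
      unfold blk3
      rw [if_neg (by omega : ¬ b < a), if_pos (le_refl b),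
        if_neg (by omega : ¬ b + 1 < a), if_neg (by omega : ¬ b + 1 ≤ b)]
      omega
    rw [hγ]
  · intro z hz hzb
    have hγ : (if (z - (b+1)).natAbs = 1 ∧ blk3 a b z ≠ blk3 a b (b+1) then ε else 0) = 0 := by
      rw [if_neg]
      rintro ⟨hn1, hn2⟩
      have hzval : z = b + 2 := by omega
      apply hn2
      subst hzval
      unfold blk3
      rw [if_neg (by omega : ¬ b + 2 < a), if_neg (by omega : ¬ b + 2 ≤ b),
        if_neg (by omega : ¬ b + 1 < a), if_neg (by omega : ¬ b + 1 ≤ b)]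
    rw [hγ, mul_zero]

lemma K1 (ε : ℝ) (V : ℤ → ℝ) (E : ℝ) (A B a b : ℤ) (ρ' : ℝ) (ℓ : ℕ)
    (hε0 : 0 < ε) (hab : a ≤ b) (hAa : A ≤ a) (hbB : b ≤ B)
    (hres : ‖Matrix.toEuclideanCLM (𝕜 := ℝ)
        (projP A B a b ℓ * (dm ε V E A B)⁻¹ * gamma3 ε A B a b)‖ ≤ 2 / ρ')
    (x : ℤ) (hx : x ∈ Finset.Icc A B) (h1 : a - (ℓ:ℤ) ≤ x) (h2 : x ≤ b + (ℓ:ℤ)) :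
    (A ≤ a - 1 → |ginv ε V E A B x a| ≤ 2 / ρ' / ε) ∧
    (b + 1 ≤ B → |ginv ε V E A B x b| ≤ 2 / ρ' / ε) := by
  constructor
  · intro hAa1
    have hmem : a - 1 ∈ Finset.Icc A B := Finset.mem_Icc.mpr ⟨hAa1, by omega⟩
    have he := entry_le_opNorm (projP A B a b ℓ * (dm ε V E A B)⁻¹ * gamma3 ε A B a b)
      ⟨x, hx⟩ ⟨a-1, hmem⟩
    rw [PGG_col_a ε V E A B a b ℓ hab (by omega) hAa ⟨x, hx⟩ hmem h1 h2] at he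
    have he2 : |ginv ε V E A B x a| * ε ≤ 2 / ρ' := by
      calc |ginv ε V E A B x a| * ε = |ginv ε V E A B x a * ε| := by
            rw [abs_mul, abs_of_pos hε0]
        _ ≤ _ := he.trans hres
    rw [le_div_iff₀ hε0]
    exact he2
  · intro hbB1
    have hmem : b + 1 ∈ Finset.Icc A B := Finset.mem_Icc.mpr ⟨by omega, hbB1⟩
    have he := entry_le_opNorm (projP A B a b ℓ * (dm ε V E A B)⁻¹ * gamma3 ε A B a b)
      ⟨x, hx⟩ ⟨b+1, hmem⟩
    rw [PGG_col_b ε V E A B a b ℓ hab hbB (by omega) ⟨x, hx⟩ hmem h1 h2] at he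
    have he2 : |ginv ε V E A B x b| * ε ≤ 2 / ρ' := by
      calc |ginv ε V E A B x b| * ε = |ginv ε V E A B x b * ε| := by
            rw [abs_mul, abs_of_pos hε0]
        _ ≤ _ := he.trans hres
    rw [le_div_iff₀ hε0]
    exact he2



lemma hGD_isUnit {ε : ℝ} {V : ℤ → ℝ} {E : ℝ} {lo hi : ℤ} {ℓ : ℕ} {γ : ℝ}
    (h : hasGreenDecay ε V E lo hi ℓ γ) : IsUnit (dm ε V E lo hi) := h.1

lemma hGD_decay {ε : ℝ} {V : ℤ → ℝ} {E : ℝ} {lo hi : ℤ} {ℓ : ℕ} {γ : ℝ}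
    (h : hasGreenDecay ε V E lo hi ℓ γ) (x y : ℤ)
    (hx : x ∈ Finset.Icc lo hi) (hy : y ∈ Finset.Icc lo hi)
    (hdist : (ℓ : ℝ) ≤ |(x:ℝ) - (y:ℝ)|) :
    |ginv ε V E lo hi x y| ≤ Real.exp (-γ * |(x:ℝ) - (y:ℝ)|) := by
  have hh := h.2 ⟨x, hx⟩ ⟨y, hy⟩ hdist
  rw [show (dirichletMatrix ε V lo hi - E • 1)⁻¹ = (dm ε V E lo hi)⁻¹ from rfl,
    ginv_apply] at hh
  exact hh

/-- one decay factor and one `2/ρ'/ε` factor -/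
lemma sub_bound (ε ρ' γ t : ℝ) (hε0 : 0 < ε) (hε1 : ε ≤ 1) (hρ0 : 0 < ρ')
    (P Q g : ℝ) (hgid : g = 0 - ε * P * Q)
    (hP : |P| ≤ Real.exp (-γ * t)) (hQ : |Q| ≤ 2/ρ'/ε) :
    |g| ≤ (2/ρ'/ε) * Real.exp (-γ * t) := by
  rw [hgid, zero_sub, abs_neg, abs_mul, abs_mul, abs_of_pos hε0]
  have h1 : ε * |P| * |Q| ≤ ε * Real.exp (-γ * t) * (2/ρ'/ε) :=
    mul_le_mul (mul_le_mul_of_nonneg_left hP hε0.le) hQ (abs_nonneg Q) (by positivity)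
  have h2 : ε * Real.exp (-γ * t) * (2/ρ'/ε) = (2/ρ') * Real.exp (-γ * t) := by
    field_simp
  have hρε : 2/ρ' ≤ 2/ρ'/ε := by
    rw [le_div_iff₀ hε0]
    have hpos : (0:ℝ) ≤ 2/ρ' := by positivity
    nlinarith
  have h3 : (2/ρ') * Real.exp (-γ * t) ≤ (2/ρ'/ε) * Real.exp (-γ * t) :=
    mul_le_mul_of_nonneg_right hρε (Real.exp_nonneg _)
  linarith

lemma cast_abs_le (l u v : ℤ) (h : l ≤ |u - v|) : (l:ℝ) ≤ |(u:ℝ) - (v:ℝ)| := by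
  have h2 : ((u - v : ℤ):ℝ) = (u:ℝ) - v := by push_cast; ring
  rw [← h2, ← Int.cast_abs]
  exact_mod_cast h

lemma exp_abs_le_one (γ t : ℝ) (hγ0 : 0 < γ) : Real.exp (-γ * |t|) ≤ 1 := by
  rw [Real.exp_le_one_iff]
  nlinarith [abs_nonneg t]

lemma K2 (ε : ℝ) (V : ℤ → ℝ) (E : ℝ) (A B a b : ℤ) (ρ' γ : ℝ) (ℓ : ℕ)
    (hε0 : 0 < ε) (hε1 : ε ≤ 1) (hγ0 : 0 < γ)
    (hab : a ≤ b) (hAa : A ≤ a) (hbB : b ≤ B) (hρ0 : 0 < ρ')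
    (hdecl : hasGreenDecay ε V E A (a-1) ℓ γ) (hdecr : hasGreenDecay ε V E (b+1) B ℓ γ)
    (hinv : IsUnit (dm ε V E A B))
    (hres : ‖Matrix.toEuclideanCLM (𝕜 := ℝ)
        (projP A B a b ℓ * (dm ε V E A B)⁻¹ * gamma3 ε A B a b)‖ ≤ 2 / ρ')
    (x : ℤ) (hx : x ∈ Finset.Icc A B) :
    (A ≤ a - 1 → |ginv ε V E A B x a| ≤ 2 / ρ' / ε) ∧
    (b + 1 ≤ B → |ginv ε V E A B x b| ≤ 2 / ρ' / ε) := by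
  obtain ⟨hxA, hxB⟩ := Finset.mem_Icc.mp hx
  by_cases hw1 : a - (ℓ:ℤ) ≤ x
  · by_cases hw2 : x ≤ b + (ℓ:ℤ)
    · exact K1 ε V E A B a b ρ' ℓ hε0 hab hAa hbB hres x hx hw1 hw2
    · push_neg at hw2
      have hxb1 : b + 1 ≤ x := by omega
      have hbB1 : b + 1 ≤ B := hxb1.trans hxB
      have hxR : x ∈ Finset.Icc (b+1) B := Finset.mem_Icc.mpr ⟨hxb1, hxB⟩
      have hb1R : b + 1 ∈ Finset.Icc (b+1) B := Finset.mem_Icc.mpr ⟨le_refl _, hbB1⟩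
      have hdist : (ℓ : ℝ) ≤ |(x:ℝ) - ((b+1:ℤ):ℝ)| :=
        cast_abs_le (ℓ:ℤ) x (b+1) (by rw [abs_of_nonneg (by omega)]; omega)
      have hgr := hGD_decay hdecr x (b+1) hxR hb1R hdist
      have hKb := K1 ε V E A B a b ρ' ℓ hε0 hab hAa hbB hres b
        (Finset.mem_Icc.mpr ⟨hAa.trans hab, hbB⟩) (by omega) (by omega)
      have hexp1 : Real.exp (-γ * |(x:ℝ) - ((b+1:ℤ):ℝ)|) ≤ 1 := exp_abs_le_one γ _ hγ0
      constructor
      · intro hAa1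
        have hid := right_identity ε V E A B b hinv (hGD_isUnit hdecr)
          (hAa.trans hab) x a hxR (Finset.mem_Icc.mpr ⟨hAa, hab.trans hbB⟩)
        rw [if_neg (by omega : ¬ b + 1 ≤ a)] at hid
        have hfin := sub_bound ε ρ' γ _ hε0 hε1 hρ0 _ _ _ hid hgr (hKb.1 hAa1)
        calc |ginv ε V E A B x a| ≤ (2/ρ'/ε) * Real.exp (-γ * |(x:ℝ) - ((b+1:ℤ):ℝ)|) := hfin
          _ ≤ (2/ρ'/ε) * 1 := mul_le_mul_of_nonneg_left hexp1 (by positivity)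
          _ = 2/ρ'/ε := mul_one _
      · intro _
        have hid := right_identity ε V E A B b hinv (hGD_isUnit hdecr)
          (hAa.trans hab) x b hxR (Finset.mem_Icc.mpr ⟨hAa.trans hab, hbB⟩)
        rw [if_neg (by omega : ¬ b + 1 ≤ b)] at hid
        have hfin := sub_bound ε ρ' γ _ hε0 hε1 hρ0 _ _ _ hid hgr (hKb.2 hbB1)
        calc |ginv ε V E A B x b| ≤ (2/ρ'/ε) * Real.exp (-γ * |(x:ℝ) - ((b+1:ℤ):ℝ)|) := hfin
          _ ≤ (2/ρ'/ε) * 1 := mul_le_mul_of_nonneg_left hexp1 (by positivity)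
          _ = 2/ρ'/ε := mul_one _
  · push_neg at hw1
    have hxa1 : x ≤ a - 1 - (ℓ:ℤ) := by omega
    have hAa1 : A ≤ a - 1 := by omega
    have hxL : x ∈ Finset.Icc A (a-1) := Finset.mem_Icc.mpr ⟨hxA, by omega⟩
    have ha1L : a - 1 ∈ Finset.Icc A (a-1) := Finset.mem_Icc.mpr ⟨hAa1, le_refl _⟩
    have hdist : (ℓ : ℝ) ≤ |(x:ℝ) - ((a-1:ℤ):ℝ)| :=
      cast_abs_le (ℓ:ℤ) x (a-1) (by rw [abs_of_nonpos (by omega)]; omega)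
    have hgl := hGD_decay hdecl x (a-1) hxL ha1L hdist
    have hKa := K1 ε V E A B a b ρ' ℓ hε0 hab hAa hbB hres a
      (Finset.mem_Icc.mpr ⟨hAa, hab.trans hbB⟩) (by omega) (by omega)
    have hexp1 : Real.exp (-γ * |(x:ℝ) - ((a-1:ℤ):ℝ)|) ≤ 1 := exp_abs_le_one γ _ hγ0
    constructor
    · intro _
      have hid := left_identity ε V E A B a hinv (hGD_isUnit hdecl)
        (hab.trans hbB) x a hxL (Finset.mem_Icc.mpr ⟨hAa, hab.trans hbB⟩)
      rw [if_neg (by omega : ¬ a ≤ a - 1)] at hid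
      have hfin := sub_bound ε ρ' γ _ hε0 hε1 hρ0 _ _ _ hid hgl (hKa.1 hAa1)
      calc |ginv ε V E A B x a| ≤ (2/ρ'/ε) * Real.exp (-γ * |(x:ℝ) - ((a-1:ℤ):ℝ)|) := hfin
        _ ≤ (2/ρ'/ε) * 1 := mul_le_mul_of_nonneg_left hexp1 (by positivity)
        _ = 2/ρ'/ε := mul_one _
    · intro hbB1
      have hid := left_identity ε V E A B a hinv (hGD_isUnit hdecl)
        (hab.trans hbB) x b hxL (Finset.mem_Icc.mpr ⟨hAa.trans hab, hbB⟩)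
      rw [if_neg (by omega : ¬ b ≤ a - 1)] at hid
      have hfin := sub_bound ε ρ' γ _ hε0 hε1 hρ0 _ _ _ hid hgl (hKa.2 hbB1)
      calc |ginv ε V E A B x b| ≤ (2/ρ'/ε) * Real.exp (-γ * |(x:ℝ) - ((a-1:ℤ):ℝ)|) := hfin
        _ ≤ (2/ρ'/ε) * 1 := mul_le_mul_of_nonneg_left hexp1 (by positivity)
        _ = 2/ρ'/ε := mul_one _

/-- main combination bound -/
lemma combo (ε ρ' γ u s t1 t2 T P Q g : ℝ)
    (hε0 : 0 < ε) (hε1 : ε ≤ 1) (hρ0 : 0 < ρ') (hγ0 : 0 < γ)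
    (hgid : g = T - ε * P * Q)
    (hT : |T| ≤ Real.exp (-γ * s))
    (hP : |P| ≤ Real.exp (-γ * t1))
    (hQ : |Q| ≤ (2/ρ'/ε) * Real.exp (-γ * t2))
    (hs : u ≤ s) (ht : u ≤ t1 + t2) :
    |g| ≤ (1 + 2/ρ') * Real.exp (-γ * u) := by
  have habs : |g| ≤ |T| + ε * |P| * |Q| := by
    rw [hgid]
    calc |T - ε * P * Q| ≤ |T| + |ε * P * Q| := abs_sub _ _
      _ = |T| + ε * |P| * |Q| := by rw [abs_mul, abs_mul, abs_of_pos hε0]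
  have h1 : ε * |P| * |Q| ≤ ε * Real.exp (-γ * t1) * ((2/ρ'/ε) * Real.exp (-γ * t2)) :=
    mul_le_mul (mul_le_mul_of_nonneg_left hP hε0.le) hQ (abs_nonneg Q) (by positivity)
  have h2 : ε * Real.exp (-γ * t1) * ((2/ρ'/ε) * Real.exp (-γ * t2))
      = (2/ρ') * Real.exp (-γ * (t1 + t2)) := by
    rw [show (-γ * (t1 + t2)) = (-γ * t1) + (-γ * t2) by ring, Real.exp_add]
    field_simp
  have h3 : Real.exp (-γ * (t1 + t2)) ≤ Real.exp (-γ * u) := by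
    apply Real.exp_le_exp.mpr
    nlinarith
  have h4 : Real.exp (-γ * s) ≤ Real.exp (-γ * u) := by
    apply Real.exp_le_exp.mpr
    nlinarith
  have h5 : (0:ℝ) ≤ 2/ρ' := by positivity
  nlinarith [Real.exp_nonneg (-γ * u)]

lemma abs_sub_cast' (x y : ℤ) (hxy : x ≤ y) : |(y:ℝ) - (x:ℝ)| = (y:ℝ) - (x:ℝ) :=
  abs_of_nonneg (sub_nonneg.mpr (by exact_mod_cast hxy))

lemma decay_ge (ε : ℝ) (V : ℤ → ℝ) (E : ℝ) (lo hi : ℤ) (ℓ : ℕ) (γ : ℝ)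
    (h : hasGreenDecay ε V E lo hi ℓ γ) (u v : ℤ)
    (hu : u ∈ Finset.Icc lo hi) (hv : v ∈ Finset.Icc lo hi)
    (hvu : v ≤ u) (hl : (ℓ:ℤ) ≤ u - v) :
    |ginv ε V E lo hi u v| ≤ Real.exp (-γ * ((u:ℝ) - (v:ℝ))) := by
  have hd := hGD_decay h u v hu hv
    (cast_abs_le (ℓ:ℤ) u v (by rw [abs_of_nonneg (by omega)]; omega))
  rwa [show |(u:ℝ) - (v:ℝ)| = (u:ℝ) - (v:ℝ) from abs_sub_cast' v u hvu] at hd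

lemma main_bound (ε : ℝ) (V : ℤ → ℝ) (E : ℝ) (A B a b : ℤ) (ρ' γ : ℝ) (ℓ : ℕ) (M : ℝ)
    (hε0 : 0 < ε) (hε1 : ε ≤ 1) (hγ0 : 0 < γ)
    (hab : a ≤ b) (hAa : A ≤ a) (hbB : b ≤ B) (hρ0 : 0 < ρ')
    (hlM : (ℓ:ℝ) ≤ M) (hΛM : ((b:ℝ) - (a:ℝ) + 1) ≤ M) (hM0 : 0 < M)
    (hdecl : hasGreenDecay ε V E A (a-1) ℓ γ) (hdecr : hasGreenDecay ε V E (b+1) B ℓ γ)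
    (hinv : IsUnit (dm ε V E A B))
    (hres : ‖Matrix.toEuclideanCLM (𝕜 := ℝ)
        (projP A B a b ℓ * (dm ε V E A B)⁻¹ * gamma3 ε A B a b)‖ ≤ 2 / ρ')
    (x y : ℤ) (hx : x ∈ Finset.Icc A B) (hy : y ∈ Finset.Icc A B) (hxy : x < y)
    (hd22 : 22 * M ≤ (y:ℝ) - (x:ℝ)) :
    |ginv ε V E A B x y| ≤ (1 + 2/ρ') * Real.exp (-γ * (((y:ℝ) - (x:ℝ)) - 2*M - 1)) := by
  obtain ⟨hxA, hxB⟩ := Finset.mem_Icc.mp hx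
  obtain ⟨hyA, hyB⟩ := Finset.mem_Icc.mp hy
  have hxyR : (x:ℝ) < (y:ℝ) := by exact_mod_cast hxy
  have hlR : (0:ℝ) ≤ (ℓ:ℝ) := Nat.cast_nonneg ℓ
  have hK2 := fun z hz => K2 ε V E A B a b ρ' γ ℓ hε0 hε1 hγ0 hab hAa hbB hρ0
    hdecl hdecr hinv hres z hz
  have hQ0 : ∀ q : ℝ, |q| ≤ 2/ρ'/ε → |q| ≤ (2/ρ'/ε) * Real.exp (-γ * 0) := by
    intro q hq; rwa [mul_zero, Real.exp_zero, mul_one]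
  by_cases hC1 : x ≤ a - 1 - (ℓ:ℤ)
  · -- Case I : x deep in the left shoulder
    have hAa1 : A ≤ a - 1 := by omega
    have hxL : x ∈ Finset.Icc A (a-1) := Finset.mem_Icc.mpr ⟨hxA, by omega⟩
    have ha1L : a - 1 ∈ Finset.Icc A (a-1) := Finset.mem_Icc.mpr ⟨hAa1, le_refl _⟩
    have hinvl := hGD_isUnit hdecl
    have hid := left_identity ε V E A B a hinv hinvl (hab.trans hbB) x y hxL hy
    have hP : |ginv ε V E A (a-1) x (a-1)| ≤ Real.exp (-γ * (((a-1:ℤ):ℝ) - (x:ℝ))) := by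
      rw [ginv_symm]
      exact decay_ge ε V E A (a-1) ℓ γ hdecl (a-1) x ha1L hxL (by omega) (by omega)
    by_cases hC2 : y ≤ a - 1
    · -- I.1 : both in the left shoulder
      rw [if_pos hC2] at hid
      have hyL : y ∈ Finset.Icc A (a-1) := Finset.mem_Icc.mpr ⟨hyA, hC2⟩
      have hT : |ginv ε V E A (a-1) x y| ≤ Real.exp (-γ * ((y:ℝ) - (x:ℝ))) := by
        rw [ginv_symm]
        apply decay_ge ε V E A (a-1) ℓ γ hdecl y x hyL hxL hxy.le
        have : (ℓ:ℝ) ≤ (y:ℝ) - (x:ℝ) := by linarith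
        exact_mod_cast this
      have hQ : |ginv ε V E A B a y| ≤ (2/ρ'/ε) * Real.exp (-γ * 0) := by
        apply hQ0
        rw [ginv_symm]
        exact (hK2 y hy).1 hAa1
      apply combo ε ρ' γ (((y:ℝ) - (x:ℝ)) - 2*M - 1) ((y:ℝ) - (x:ℝ))
        (((a-1:ℤ):ℝ) - (x:ℝ)) 0 _ _ _ _ hε0 hε1 hρ0 hγ0 hid hT hP hQ
      · linarith
      · have : (y:ℝ) ≤ ((a-1:ℤ):ℝ) := by exact_mod_cast hC2
        linarith
    · push_neg at hC2
      rw [if_neg (by omega : ¬ y ≤ a - 1)] at hid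
      by_cases hC3 : y ≤ b + (ℓ:ℤ)
      · -- I.2 : y in the middle window
        have hQ : |ginv ε V E A B a y| ≤ (2/ρ'/ε) * Real.exp (-γ * 0) := by
          apply hQ0
          rw [ginv_symm]
          exact ((K1 ε V E A B a b ρ' ℓ hε0 hab hAa hbB hres y hy (by omega) hC3).1 hAa1)
        apply combo ε ρ' γ (((y:ℝ) - (x:ℝ)) - 2*M - 1) ((y:ℝ) - (x:ℝ))
          (((a-1:ℤ):ℝ) - (x:ℝ)) 0 _ _ _ _ hε0 hε1 hρ0 hγ0 hid
          (by rw [abs_zero]; exact Real.exp_nonneg _) hP hQ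
        · linarith
        · have h1 : (y:ℝ) ≤ (b:ℝ) + (ℓ:ℝ) := by exact_mod_cast hC3
          have h2 : ((a-1:ℤ):ℝ) = (a:ℝ) - 1 := by push_cast; ring
          linarith
      · -- I.3 : y deep in the right shoulder
        push_neg at hC3
        have hbB1 : b + 1 ≤ B := by omega
        have hyR : y ∈ Finset.Icc (b+1) B := Finset.mem_Icc.mpr ⟨by omega, hyB⟩
        have hb1R : b + 1 ∈ Finset.Icc (b+1) B := Finset.mem_Icc.mpr ⟨le_refl _, hbB1⟩
        have hidy := right_identity ε V E A B b hinv (hGD_isUnit hdecr)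
          (hAa.trans hab) y a hyR (Finset.mem_Icc.mpr ⟨hAa, hab.trans hbB⟩)
        rw [if_neg (by omega : ¬ b + 1 ≤ a)] at hidy
        have hgry : |ginv ε V E (b+1) B y (b+1)| ≤ Real.exp (-γ * ((y:ℝ) - ((b+1:ℤ):ℝ))) :=
          decay_ge ε V E (b+1) B ℓ γ hdecr y (b+1) hyR hb1R (by omega) (by omega)
        have hgba : |ginv ε V E A B b a| ≤ 2/ρ'/ε :=
          (hK2 b (Finset.mem_Icc.mpr ⟨hAa.trans hab, hbB⟩)).1 hAa1
        have hQ : |ginv ε V E A B a y| ≤ (2/ρ'/ε) * Real.exp (-γ * ((y:ℝ) - ((b+1:ℤ):ℝ))) := by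
          rw [ginv_symm]
          exact sub_bound ε ρ' γ _ hε0 hε1 hρ0 _ _ _ hidy hgry hgba
        apply combo ε ρ' γ (((y:ℝ) - (x:ℝ)) - 2*M - 1) ((y:ℝ) - (x:ℝ))
          (((a-1:ℤ):ℝ) - (x:ℝ)) ((y:ℝ) - ((b+1:ℤ):ℝ)) _ _ _ _ hε0 hε1 hρ0 hγ0 hid
          (by rw [abs_zero]; exact Real.exp_nonneg _) hP hQ
        · linarith
        · have h2 : ((a-1:ℤ):ℝ) = (a:ℝ) - 1 := by push_cast; ring
          have h3 : ((b+1:ℤ):ℝ) = (b:ℝ) + 1 := by push_cast; ring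
          linarith
  · by_cases hC4 : x ≤ b + (ℓ:ℤ)
    · -- Case II : x in the middle window, y must be deep right
      push_neg at hC1
      have hxaℓ : a - (ℓ:ℤ) ≤ x := by omega
      have hyfar : b + (ℓ:ℤ) < y := by
        by_contra hcon
        push_neg at hcon
        have h1 : (y:ℝ) ≤ (b:ℝ) + (ℓ:ℝ) := by exact_mod_cast hcon
        have h2 : (a:ℝ) - (ℓ:ℝ) ≤ (x:ℝ) := by exact_mod_cast hxaℓ
        nlinarith
      have hbB1 : b + 1 ≤ B := by omega
      have hyR : y ∈ Finset.Icc (b+1) B := Finset.mem_Icc.mpr ⟨by omega, hyB⟩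
      have hb1R : b + 1 ∈ Finset.Icc (b+1) B := Finset.mem_Icc.mpr ⟨le_refl _, hbB1⟩
      have hidy := right_identity ε V E A B b hinv (hGD_isUnit hdecr)
        (hAa.trans hab) y x hyR hx
      have hid : ginv ε V E A B x y = (if b + 1 ≤ x then ginv ε V E (b+1) B y x else 0)
          - ε * ginv ε V E (b+1) B y (b+1) * ginv ε V E A B b x := by
        rw [ginv_symm]; exact hidy
      have hT : |(if b + 1 ≤ x then ginv ε V E (b+1) B y x else 0)|
          ≤ Real.exp (-γ * ((y:ℝ) - (x:ℝ))) := by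
        by_cases hbx : b + 1 ≤ x
        · rw [if_pos hbx]
          exact decay_ge ε V E (b+1) B ℓ γ hdecr y x hyR
            (Finset.mem_Icc.mpr ⟨hbx, hxB⟩) hxy.le
            (by have : (ℓ:ℝ) ≤ (y:ℝ) - (x:ℝ) := by linarith
                exact_mod_cast this)
        · rw [if_neg hbx, abs_zero]; exact Real.exp_nonneg _
      have hP : |ginv ε V E (b+1) B y (b+1)| ≤ Real.exp (-γ * ((y:ℝ) - ((b+1:ℤ):ℝ))) :=
        decay_ge ε V E (b+1) B ℓ γ hdecr y (b+1) hyR hb1R (by omega) (by omega)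
      have hQ : |ginv ε V E A B b x| ≤ (2/ρ'/ε) * Real.exp (-γ * 0) := by
        apply hQ0
        rw [ginv_symm]
        exact (hK2 x hx).2 hbB1
      apply combo ε ρ' γ (((y:ℝ) - (x:ℝ)) - 2*M - 1) ((y:ℝ) - (x:ℝ))
        ((y:ℝ) - ((b+1:ℤ):ℝ)) 0 _ _ _ _ hε0 hε1 hρ0 hγ0 hid hT hP hQ
      · linarith
      · have h2 : ((b+1:ℤ):ℝ) = (b:ℝ) + 1 := by push_cast; ring
        have h3 : (a:ℝ) - (ℓ:ℝ) ≤ (x:ℝ) := by exact_mod_cast hxaℓ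
        linarith
    · -- Case III : both deep in the right shoulder
      push_neg at hC4
      have hbB1 : b + 1 ≤ B := by omega
      have hxR : x ∈ Finset.Icc (b+1) B := Finset.mem_Icc.mpr ⟨by omega, hxB⟩
      have hyR : y ∈ Finset.Icc (b+1) B := Finset.mem_Icc.mpr ⟨by omega, hyB⟩
      have hb1R : b + 1 ∈ Finset.Icc (b+1) B := Finset.mem_Icc.mpr ⟨le_refl _, hbB1⟩
      have hid := right_identity ε V E A B b hinv (hGD_isUnit hdecr)
        (hAa.trans hab) x y hxR hy
      rw [if_pos (by omega : b + 1 ≤ y)] at hid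
      have hT : |ginv ε V E (b+1) B x y| ≤ Real.exp (-γ * ((y:ℝ) - (x:ℝ))) := by
        rw [ginv_symm]
        apply decay_ge ε V E (b+1) B ℓ γ hdecr y x hyR hxR hxy.le
        have : (ℓ:ℝ) ≤ (y:ℝ) - (x:ℝ) := by linarith
        exact_mod_cast this
      have hP : |ginv ε V E (b+1) B x (b+1)| ≤ Real.exp (-γ * ((x:ℝ) - ((b+1:ℤ):ℝ))) :=
        decay_ge ε V E (b+1) B ℓ γ hdecr x (b+1) hxR hb1R (by omega) (by omega)
      have hidy := right_identity ε V E A B b hinv (hGD_isUnit hdecr)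
        (hAa.trans hab) y b hyR (Finset.mem_Icc.mpr ⟨hAa.trans hab, hbB⟩)
      rw [if_neg (by omega : ¬ b + 1 ≤ b)] at hidy
      have hgry : |ginv ε V E (b+1) B y (b+1)| ≤ Real.exp (-γ * ((y:ℝ) - ((b+1:ℤ):ℝ))) :=
        decay_ge ε V E (b+1) B ℓ γ hdecr y (b+1) hyR hb1R (by omega) (by omega)
      have hgbb : |ginv ε V E A B b b| ≤ 2/ρ'/ε :=
        (hK2 b (Finset.mem_Icc.mpr ⟨hAa.trans hab, hbB⟩)).2 hbB1
      have hQ : |ginv ε V E A B b y| ≤ (2/ρ'/ε) * Real.exp (-γ * ((y:ℝ) - ((b+1:ℤ):ℝ))) := by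
        rw [ginv_symm]
        exact sub_bound ε ρ' γ _ hε0 hε1 hρ0 _ _ _ hidy hgry hgbb
      apply combo ε ρ' γ (((y:ℝ) - (x:ℝ)) - 2*M - 1) ((y:ℝ) - (x:ℝ))
        ((x:ℝ) - ((b+1:ℤ):ℝ)) ((y:ℝ) - ((b+1:ℤ):ℝ)) _ _ _ _ hε0 hε1 hρ0 hγ0 hid hT hP hQ
      · linarith
      · have h2 : ((b+1:ℤ):ℝ) = (b:ℝ) + 1 := by push_cast; ring
        have h3 : (b:ℝ) + (ℓ:ℝ) + 1 ≤ (x:ℝ) := by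
          exact_mod_cast (by omega : b + (ℓ:ℤ) + 1 ≤ x)
        linarith

lemma final_arith (L M γ ρ' d lhat : ℝ)
    (hl2a : 2 * Real.log 2 ≤ L) (hl2b : Real.log 2 ≤ M)
    (hγ1 : 1 < γ) (hγ2 : γ ≤ L) (hρ0 : 0 < ρ') (hρ : ρ' < 1/2)
    (hρM : |Real.log ρ'| ≤ M)
    (hlhat : 16 * L * M < lhat) (hd : lhat ≤ d) :
    (1 + 2/ρ') * Real.exp (-γ * (d - 2*M - 1)) ≤ Real.exp (-(γ - 6*L*M/lhat) * d) := by
  have hl2lo : (0.6931:ℝ) < Real.log 2 := by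
    have := Real.log_two_gt_d9; linarith
  have hl2hi : Real.log 2 < 0.6932 := by
    have := Real.log_two_lt_d9; linarith
  have hM0 : 0 < M := by linarith
  have hL0 : 0 < L := by linarith
  have hlhat0 : 0 < lhat := by nlinarith
  have hγ0 : 0 < γ := by linarith
  have hpos : (0:ℝ) < 1 + 2/ρ' := by positivity
  rw [← Real.exp_log hpos, ← Real.exp_add]
  apply Real.exp_le_exp.mpr
  -- the key quotient fact
  have hq : 6*L*M ≤ 6*L*M/lhat*d := by
    have h1 : 6*L*M*lhat ≤ 6*L*M*d := mul_le_mul_of_nonneg_left hd (by positivity)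
    rw [div_mul_eq_mul_div, le_div_iff₀ hlhat0]
    linarith
  -- bound the logarithm
  have hlog : Real.log (1 + 2/ρ') ≤ Real.log 3 + M := by
    have h1 : 1 + 2/ρ' ≤ 3/ρ' := by
      rw [show (3:ℝ)/ρ' = 1/ρ' + 2/ρ' by ring]
      have : (1:ℝ) ≤ 1/ρ' := by
        rw [le_div_iff₀ hρ0]; linarith
      linarith
    have h2 : Real.log (1 + 2/ρ') ≤ Real.log (3/ρ') := Real.log_le_log hpos h1
    have h3 : Real.log (3/ρ') = Real.log 3 - Real.log ρ' :=
      Real.log_div (by norm_num) (ne_of_gt hρ0)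
    have h4 : Real.log ρ' < 0 := Real.log_neg hρ0 (by linarith)
    have h5 : -Real.log ρ' ≤ M := by rw [abs_of_neg h4] at hρM; linarith
    linarith
  have hlog3 : Real.log 3 ≤ 2 * Real.log 2 := by
    calc Real.log 3 ≤ Real.log 4 := Real.log_le_log (by norm_num) (by norm_num)
      _ = 2 * Real.log 2 := by
        rw [show (4:ℝ) = 2^2 by norm_num, Real.log_pow]; push_cast; ring
  -- numeric core : log(1+2/ρ') + γ(2M+1) ≤ 6LM
  have hM69 : (0.6931:ℝ) ≤ M := by linarith
  have hL138 : (1.3862:ℝ) ≤ L := by linarith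
  have hcore : Real.log (1 + 2/ρ') + γ * (2*M+1) ≤ 6*L*M := by
    have hγL : γ * (2*M+1) ≤ L * (2*M+1) :=
      mul_le_mul_of_nonneg_right hγ2 (by linarith)
    nlinarith [mul_nonneg (sub_nonneg.mpr hL138) (sub_nonneg.mpr hM69)]
  nlinarith


end BGaux

set_option maxHeartbeats 1600000 in
set_option synthInstance.maxHeartbeats 1000000 in
/-- **Bootstrapped Green's function decay** (cf. Lemma A.2): if the shoulders `Λ_l, Λ_r` of the
three-block partition of `Λ̂ = [A,B]` have `(ℓ,γ)` Green's function decay, the decoupled resolvent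
bound `‖P (H^{Λ̂} − E)⁻¹ Γ_𝒫‖ ≤ 2/ρ̂` holds, and `|Λ| ≤ M := max(ℓ, |log ρ̂|)`, then for any
`ℓ̂ > 16|log ε| M`, the interval `Λ̂` has Green's function decay for `(ℓ̂, γ − 6|log ε| M/ℓ̂)`. -/
theorem bootstrap_green_decay
    (ε : ℝ) (hε0 : 0 < ε) (hε : ε < 1 / 7) (V : ℤ → ℝ) (E : ℝ)
    (A B a b : ℤ) (hAa : A ≤ a) (hab : a ≤ b) (hbB : b ≤ B)
    (ρ' γ : ℝ) (ℓ ℓhat : ℕ)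
    (hρ0 : 0 < ρ') (hρ : ρ' < 1 / 2) (hγ1 : 1 < γ) (hγ2 : γ ≤ |Real.log ε|)
    (hM : ((b - a + 1 : ℤ) : ℝ) ≤ max (ℓ : ℝ) |Real.log ρ'|)
    (hdecl : hasGreenDecay ε V E A (a - 1) ℓ γ)
    (hdecr : hasGreenDecay ε V E (b + 1) B ℓ γ)
    (hinv : IsUnit (dirichletMatrix ε V A B - E • 1))
    (hres : ‖Matrix.toEuclideanCLM (𝕜 := ℝ)
        (projP A B a b ℓ * (dirichletMatrix ε V A B - E • 1)⁻¹ * gamma3 ε A B a b)‖ ≤ 2 / ρ')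
    (hℓhat : 16 * |Real.log ε| * max (ℓ : ℝ) |Real.log ρ'| < (ℓhat : ℝ)) :
    hasGreenDecay ε V E A B ℓhat
      (γ - 6 * |Real.log ε| * max (ℓ : ℝ) |Real.log ρ'| / (ℓhat : ℝ)) := by
  have hε1 : ε ≤ 1 := by linarith
  have hγ0 : (0:ℝ) < γ := by linarith
  have hl2lo : (0.6931:ℝ) < Real.log 2 := by
    have := Real.log_two_gt_d9; linarith
  have hLlb : 2 * Real.log 2 ≤ |Real.log ε| := by
    have h1 : Real.log ε < Real.log (1/4) := Real.log_lt_log hε0 (by linarith)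
    have h2 : Real.log ((1:ℝ)/4) = -(2*Real.log 2) := by
      rw [show (1:ℝ)/4 = ((4:ℝ))⁻¹ by norm_num, Real.log_inv,
        show (4:ℝ) = 2^2 by norm_num, Real.log_pow]
      push_cast; ring
    have h3 : Real.log ε < 0 := Real.log_neg hε0 (by linarith)
    rw [abs_of_neg h3]; linarith
  set M := max ((ℓ:ℝ)) |Real.log ρ'| with hMdef
  have hlM : (ℓ:ℝ) ≤ M := le_max_left _ _
  have hρM : |Real.log ρ'| ≤ M := le_max_right _ _
  have hMlb : Real.log 2 ≤ M := by
    have h4 : Real.log ρ' < Real.log (1/2) := Real.log_lt_log hρ0 hρ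
    have h5 : Real.log ((1:ℝ)/2) = -Real.log 2 := by
      rw [show (1:ℝ)/2 = ((2:ℝ))⁻¹ by norm_num, Real.log_inv]
    have h6 : Real.log ρ' < 0 := Real.log_neg hρ0 (by linarith)
    have h7 : Real.log 2 ≤ |Real.log ρ'| := by rw [abs_of_neg h6]; linarith
    linarith
  have hM0 : (0:ℝ) < M := by linarith
  have hΛM : (b:ℝ) - (a:ℝ) + 1 ≤ M := by push_cast at hM; linarith
  have hinv' : IsUnit (BGaux.dm ε V E A B) := hinv
  have hres' : ‖Matrix.toEuclideanCLM (𝕜 := ℝ)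
      (projP A B a b ℓ * (BGaux.dm ε V E A B)⁻¹ * gamma3 ε A B a b)‖ ≤ 2 / ρ' := hres
  have hℓhat0 : (0:ℝ) < (ℓhat:ℝ) := by
    have : (0:ℝ) ≤ 16 * |Real.log ε| * M := by positivity
    linarith
  constructor
  · exact hinv
  intro m n hdist
  rw [show (dirichletMatrix ε V A B - E • 1)⁻¹ = (BGaux.dm ε V E A B)⁻¹ from rfl,
    BGaux.ginv_apply]
  have key : ∀ x y : ℤ, x ∈ Finset.Icc A B → y ∈ Finset.Icc A B → x < y →
      (ℓhat:ℝ) ≤ (y:ℝ) - (x:ℝ) →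
      |BGaux.ginv ε V E A B x y|
        ≤ Real.exp (-(γ - 6 * |Real.log ε| * M / (ℓhat:ℝ)) * ((y:ℝ)-(x:ℝ))) := by
    intro x y hxm hym hxy hdxy
    have hL138 : (1.3862:ℝ) ≤ |Real.log ε| := by linarith
    have hd22 : 22 * M ≤ (y:ℝ) - (x:ℝ) := by
      nlinarith [mul_nonneg (sub_nonneg.mpr hL138) hM0.le]
    calc |BGaux.ginv ε V E A B x y|
        ≤ (1 + 2/ρ') * Real.exp (-γ * (((y:ℝ)-(x:ℝ)) - 2*M - 1)) :=
          BGaux.main_bound ε V E A B a b ρ' γ ℓ M hε0 hε1 hγ0 hab hAa hbB hρ0 hlM hΛM hM0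
            hdecl hdecr hinv' hres' x y hxm hym hxy hd22
      _ ≤ _ := BGaux.final_arith (|Real.log ε|) M γ ρ' _ _ hLlb hMlb hγ1 hγ2 hρ0 hρ hρM
            hℓhat hdxy
  rcases lt_trichotomy ((m:ℤ)) ((n:ℤ)) with hlt | heq | hgt
  · have habs : |((m:ℤ):ℝ) - ((n:ℤ):ℝ)| = ((n:ℤ):ℝ) - ((m:ℤ):ℝ) := by
      rw [abs_of_nonpos (sub_nonpos.mpr (by exact_mod_cast hlt.le)), neg_sub]
    rw [habs] at hdist ⊢
    exact key (m:ℤ) (n:ℤ) m.2 n.2 hlt hdist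
  · exfalso
    rw [heq, sub_self, abs_zero] at hdist
    linarith
  · have habs : |((m:ℤ):ℝ) - ((n:ℤ):ℝ)| = ((m:ℤ):ℝ) - ((n:ℤ):ℝ) := by
      rw [abs_of_nonneg (sub_nonneg.mpr (by exact_mod_cast hgt.le))]
    rw [habs] at hdist ⊢
    rw [BGaux.ginv_symm]
    exact key (n:ℤ) (m:ℤ) n.2 m.2 hgt hdist
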